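/- Let a₁, a₂, …, a_k be positive integers with gcd(a₁,…,a_k) = 1. Then the Sylvester number (the cardinality of NR) satisfies n(a₁,…,a_k) = (1/a₁) ∑_{i=1}^{a₁−1} m_i − (a₁ − 1)/2. -/

import Mathlib

/-- the Sylvester number (cardinality of the set of nonrepresentable
positive integers) equals `(1/a₁) ∑_{i=1}^{a₁-1} m_i - (a₁-1)/2`. -/
theorem sylvester_number_eq
    (k : ℕ) (hk : 0 < k) (a : Fin k → ℕ) (ha : ∀ i, 0 < a i)
    (hgcd : Finset.univ.gcd a = 1)
    (m : ℕ → ℕ)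
    (hm : ∀ i, 1 ≤ i → i < a ⟨0, hk⟩ →
      0 < m i ∧ (∃ x : Fin k → ℕ, m i = ∑ j, x j * a j) ∧ m i % a ⟨0, hk⟩ = i ∧
        ∀ n : ℕ, 0 < n → (∃ x : Fin k → ℕ, n = ∑ j, x j * a j) → n % a ⟨0, hk⟩ = i →
          m i ≤ n) :
    (({n : ℕ | 0 < n ∧ ¬∃ x : Fin k → ℕ, n = ∑ j, x j * a j}).ncard : ℚ) =
      (1 / (a ⟨0, hk⟩ : ℚ)) * ∑ i ∈ Finset.Ico 1 (a ⟨0, hk⟩), (m i : ℚ)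
        - ((a ⟨0, hk⟩ : ℚ) - 1) / 2 := by
  set i0 : Fin k := ⟨0, hk⟩ with hi0
  set A := a i0 with hAdef
  have hA0 : 0 < A := ha i0
  -- representability is stable under adding multiples of A
  have rep_add : ∀ n c : ℕ, (∃ x : Fin k → ℕ, n = ∑ j, x j * a j) →
      (∃ x : Fin k → ℕ, n + A * c = ∑ j, x j * a j) := by
    rintro n c ⟨x, hx⟩
    refine ⟨fun j => x j + if j = i0 then c else 0, ?_⟩
    have h1 : ∑ j, (x j + if j = i0 then c else 0) * a j
        = (∑ j, x j * a j) + (∑ j, (if j = i0 then c else 0) * a j) := by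
      rw [← Finset.sum_add_distrib]; apply Finset.sum_congr rfl; intros; ring
    have h2 : ∑ j, (if j = i0 then c else 0) * a j = c * a i0 := by
      simp [ite_mul]
    rw [h1, h2, ← hx, ← hAdef, mul_comm]
  have rep_dvd : ∀ n : ℕ, n % A = 0 → (∃ x : Fin k → ℕ, n = ∑ j, x j * a j) := by
    intro n hn
    have h := rep_add 0 (n / A) ⟨fun _ => 0, by simp⟩
    have hn' : A * (n / A) = n := Nat.mul_div_cancel' (Nat.dvd_of_mod_eq_zero hn)
    simpa [hn'] using h
  -- the finite set
  set F : Finset ℕ := (Finset.Ico 1 A).biUnion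
      (fun i => (Finset.range (m i / A)).image (fun t => i + A * t)) with hF
  have mem_image_mod : ∀ i n, i < A →
      n ∈ (Finset.range (m i / A)).image (fun t => i + A * t) → n % A = i := by
    intro i n hiA hn
    simp only [Finset.mem_image, Finset.mem_range] at hn
    obtain ⟨t, ht, rfl⟩ := hn
    simp [Nat.add_mul_mod_self_left, Nat.mod_eq_of_lt hiA]
  have hset : {n : ℕ | 0 < n ∧ ¬∃ x : Fin k → ℕ, n = ∑ j, x j * a j} = ↑F := by
    ext n
    simp only [Set.mem_setOf_eq, Finset.mem_coe, hF, Finset.mem_biUnion, Finset.mem_Ico]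
    constructor
    · rintro ⟨hn0, hnrep⟩
      have hiA : n % A < A := Nat.mod_lt _ hA0
      have hi1 : 1 ≤ n % A := by
        rcases Nat.eq_zero_or_pos (n % A) with h | h
        · exact absurd (rep_dvd n h) hnrep
        · exact h
      obtain ⟨hm0, hmrep, hmmod, hmin⟩ := hm (n % A) hi1 hiA
      have hnm : n < m (n % A) := by
        by_contra hge
        push_neg at hge
        have hdvd : A ∣ n - m (n % A) := (Nat.modEq_iff_dvd' hge).mp hmmod
        obtain ⟨c, hc⟩ := hdvd
        have heq : n = m (n % A) + A * c := by omega
        exact hnrep (heq ▸ rep_add (m (n % A)) c hmrep)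
      refine ⟨n % A, ⟨hi1, hiA⟩, ?_⟩
      simp only [Finset.mem_image, Finset.mem_range]
      have h1 := Nat.div_add_mod n A
      have h2 := Nat.div_add_mod (m (n % A)) A
      rw [hmmod] at h2
      refine ⟨n / A, ?_, by omega⟩
      have h3 : A * (n / A) < A * (m (n % A) / A) := by omega
      exact Nat.lt_of_mul_lt_mul_left h3
    · rintro ⟨i, ⟨hi1, hiA⟩, hn⟩
      have hmod := mem_image_mod i n hiA hn
      obtain ⟨hm0, hmrep, hmmod, hmin⟩ := hm i hi1 hiA
      have hlt : n < m i := by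
        simp only [Finset.mem_image, Finset.mem_range] at hn
        obtain ⟨t, ht, rfl⟩ := hn
        have h2 := Nat.div_add_mod (m i) A
        rw [hmmod] at h2
        have h3 : A * t < A * (m i / A) := Nat.mul_lt_mul_of_pos_left ht hA0
        omega
      have hn0 : 0 < n := by have := Nat.mod_le n A; omega
      exact ⟨hn0, fun hrep => absurd (hmin n hn0 hrep hmod) (Nat.not_le.mpr hlt)⟩
  rw [hset, Set.ncard_coe_finset]
  have hcard : F.card = ∑ i ∈ Finset.Ico 1 A, (m i / A) := by
    rw [hF, Finset.card_biUnion]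
    · apply Finset.sum_congr rfl
      intro i _
      rw [Finset.card_image_of_injective _ (fun t₁ t₂ h => by
        have h' : A * t₁ = A * t₂ := by omega
        exact Nat.eq_of_mul_eq_mul_left hA0 h'), Finset.card_range]
    · intro i hi j hj hij
      rw [Function.onFun, Finset.disjoint_left]
      intro n hni hnj
      have h1 := mem_image_mod i n (Finset.mem_Ico.mp hi).2 hni
      have h2 := mem_image_mod j n (Finset.mem_Ico.mp hj).2 hnj
      exact hij (by omega)
  rw [hcard]
  -- arithmetic
  have hmq : ∀ i ∈ Finset.Ico 1 A, (m i : ℚ) = A * ((m i / A : ℕ) : ℚ) + i := by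
    intro i hi
    obtain ⟨hi1, hiA⟩ := Finset.mem_Ico.mp hi
    obtain ⟨_, _, hmmod, _⟩ := hm i hi1 hiA
    have h := Nat.div_add_mod (m i) A
    rw [hmmod] at h
    exact_mod_cast congrArg (Nat.cast : ℕ → ℚ) h.symm
  have hsum_m : ∑ i ∈ Finset.Ico 1 A, (m i : ℚ)
      = A * (∑ i ∈ Finset.Ico 1 A, ((m i / A : ℕ) : ℚ)) + ∑ i ∈ Finset.Ico 1 A, (i : ℚ) := by
    rw [Finset.mul_sum, ← Finset.sum_add_distrib]
    exact Finset.sum_congr rfl hmq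
  have hgauss : (∑ i ∈ Finset.Ico 1 A, (i : ℚ)) * 2 = A * (A - 1) := by
    have hr : Finset.range A = insert 0 (Finset.Ico 1 A) := by
      ext x; simp [Finset.mem_Ico]; omega
    have hnat := Finset.sum_range_id_mul_two A
    have hq : (∑ i ∈ Finset.range A, (i : ℚ)) * 2 = A * (A - 1) := by
      have hc := congrArg (Nat.cast : ℕ → ℚ) hnat
      push_cast [Nat.cast_sub hA0] at hc
      convert hc using 2
    rw [hr, Finset.sum_insert (by simp)] at hq
    simpa using hq
  rw [hsum_m, Nat.cast_sum]
  have hAQ : (A : ℚ) ≠ 0 := by exact_mod_cast hA0.ne'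
  field_simp
  linarith [hgauss]
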